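/- Let v ∈ ℝ^D be nonzero, R a D×D matrix with ‖R‖_op ≤ λ < 1, and x̂ = v + ReLU(R v). Then for every nonzero unit vector μ ∈ ℝ^D, the cosine similarities satisfy |C(x̂, μ) − C(v, μ)| ≤ 2λ/(1 − λ), where C(a,b) = ⟨a,b⟩/(‖a‖₂‖b‖₂). -/

import Mathlib

open RealInnerProductSpace

noncomputable def relu {D : ℕ} (u : EuclideanSpace ℝ (Fin D)) : EuclideanSpace ℝ (Fin D) :=
  WithLp.toLp 2 (fun j => max (u j) 0)

noncomputable def cosSim {D : ℕ} (a b : EuclideanSpace ℝ (Fin D)) : ℝ :=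
  ⟪a, b⟫ / (‖a‖ * ‖b‖)

lemma relu_norm_le {D : ℕ} (u : EuclideanSpace ℝ (Fin D)) : ‖relu u‖ ≤ ‖u‖ := by
  rw [EuclideanSpace.norm_eq, EuclideanSpace.norm_eq]
  apply Real.sqrt_le_sqrt
  apply Finset.sum_le_sum
  intro i _
  have h : |max (u i) 0| ≤ |u i| := by
    rcases le_or_gt (u i) 0 with h | h
    · simp [max_eq_right h, abs_nonneg]
    · simp [max_eq_left h.le]
  calc ‖relu u i‖ ^ 2 = |max (u i) 0| ^ 2 := by simp [relu, Real.norm_eq_abs]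
    _ ≤ |u i| ^ 2 := by nlinarith [abs_nonneg (max (u i) 0)]
    _ = ‖u i‖ ^ 2 := by simp [Real.norm_eq_abs]

theorem cosSim_residual_perturb {D : ℕ} (v : EuclideanSpace ℝ (Fin D)) (hv : v ≠ 0)
    (R : EuclideanSpace ℝ (Fin D) →L[ℝ] EuclideanSpace ℝ (Fin D))
    (lam : ℝ) (hR : ‖R‖ ≤ lam) (hlam : lam < 1)
    (mu : EuclideanSpace ℝ (Fin D)) (hmu : mu ≠ 0) (hmu1 : ‖mu‖ = 1) :
    |cosSim (v + relu (R v)) mu - cosSim v mu| ≤ 2 * lam / (1 - lam) := by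
  set r := relu (R v) with hrdef
  set x := v + r with hxdef
  have hb : (0:ℝ) < ‖v‖ := norm_pos_iff.mpr hv
  have hlam0 : (0:ℝ) ≤ lam := le_trans (norm_nonneg R) hR
  have hrle : ‖r‖ ≤ lam * ‖v‖ := by
    calc ‖r‖ ≤ ‖R v‖ := relu_norm_le (R v)
      _ ≤ ‖R‖ * ‖v‖ := R.le_opNorm v
      _ ≤ lam * ‖v‖ := by nlinarith
  have hxv : ‖v‖ - ‖r‖ ≤ ‖x‖ := by
    have h := norm_sub_le x r
    have hx' : x - r = v := by simp [hxdef]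
    rw [hx'] at h
    linarith
  have hax : (1 - lam) * ‖v‖ ≤ ‖x‖ := by nlinarith
  have ha : 0 < ‖x‖ := lt_of_lt_of_le (by nlinarith) hax
  have hA : |⟪r, mu⟫| ≤ ‖r‖ := by
    have h := abs_real_inner_le_norm r mu
    rwa [hmu1, mul_one] at h
  have hB : |⟪v, mu⟫| ≤ ‖v‖ := by
    have h := abs_real_inner_le_norm v mu
    rwa [hmu1, mul_one] at h
  have hnn : |‖v‖ - ‖x‖| ≤ ‖r‖ := by
    have h := abs_norm_sub_norm_le v x
    have hx' : v - x = -r := by simp [hxdef]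
    rw [hx'] at h
    rwa [norm_neg] at h
  have hinner : ⟪x, mu⟫ = ⟪v, mu⟫ + ⟪r, mu⟫ := inner_add_left v r mu
  have key : |⟪x, mu⟫ / ‖x‖ - ⟪v, mu⟫ / ‖v‖| ≤ 2 * ‖r‖ / ‖x‖ := by
    have hsplit : ⟪x, mu⟫ / ‖x‖ - ⟪v, mu⟫ / ‖v‖
        = ⟪r, mu⟫ / ‖x‖ + ⟪v, mu⟫ * (‖v‖ - ‖x‖) / (‖x‖ * ‖v‖) := by
      rw [hinner]; field_simp; ring
    rw [hsplit]
    have h1 : |⟪r, mu⟫ / ‖x‖| ≤ ‖r‖ / ‖x‖ := by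
      rw [abs_div, abs_of_pos ha]
      exact div_le_div_of_nonneg_right hA ha.le
    have h2 : |⟪v, mu⟫ * (‖v‖ - ‖x‖) / (‖x‖ * ‖v‖)| ≤ ‖r‖ / ‖x‖ := by
      rw [abs_div, abs_mul, abs_of_pos (mul_pos ha hb)]
      have hnum : |⟪v, mu⟫| * |‖v‖ - ‖x‖| ≤ ‖v‖ * ‖r‖ := by
        have h3 := abs_nonneg (⟪v, mu⟫ : ℝ)
        have h4 := abs_nonneg (‖v‖ - ‖x‖)
        nlinarith
      calc |⟪v, mu⟫| * |‖v‖ - ‖x‖| / (‖x‖ * ‖v‖) ≤ ‖v‖ * ‖r‖ / (‖x‖ * ‖v‖) :=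
            div_le_div_of_nonneg_right hnum (mul_pos ha hb).le
        _ = ‖r‖ / ‖x‖ := by field_simp
    calc |⟪r, mu⟫ / ‖x‖ + ⟪v, mu⟫ * (‖v‖ - ‖x‖) / (‖x‖ * ‖v‖)|
        ≤ |⟪r, mu⟫ / ‖x‖| + |⟪v, mu⟫ * (‖v‖ - ‖x‖) / (‖x‖ * ‖v‖)| := abs_add_le _ _
      _ ≤ ‖r‖ / ‖x‖ + ‖r‖ / ‖x‖ := add_le_add h1 h2
      _ = 2 * ‖r‖ / ‖x‖ := by ring
  have goal_eq : cosSim x mu - cosSim v mu = ⟪x, mu⟫ / ‖x‖ - ⟪v, mu⟫ / ‖v‖ := by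
    simp [cosSim, hmu1]
  rw [goal_eq]
  calc |⟪x, mu⟫ / ‖x‖ - ⟪v, mu⟫ / ‖v‖| ≤ 2 * ‖r‖ / ‖x‖ := key
    _ ≤ 2 * (lam * ‖v‖) / ((1 - lam) * ‖v‖) := by
        apply div_le_div₀ (by positivity) (by linarith) (by nlinarith) hax
    _ = 2 * lam / (1 - lam) := by
        rw [show (2:ℝ) * (lam * ‖v‖) = (2 * lam) * ‖v‖ from by ring,
          mul_div_mul_right _ _ hb.ne']
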